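/- Let q be a positive integer with distinct prime factors q₁ < … < q_r. Then ∏_{i=1}^{r} (1 + 1/q_i) ≤ K · log log(e^e · q) for some absolute constant K. -/

import Mathlib

open Finset Real

-- Step 1: Chebyshev theta bound
lemma theta_le (N : ℕ) :
    ∑ p ∈ (Icc 1 N).filter Nat.Prime, Real.log p ≤ N * Real.log 4 := by
  have h1 : (Icc 1 N).filter Nat.Prime = (range (N+1)).filter Nat.Prime := by
    ext p
    simp only [mem_filter, mem_Icc, mem_range, Nat.lt_succ_iff]
    exact ⟨fun h => ⟨h.1.2, h.2⟩, fun h => ⟨⟨h.2.one_lt.le.trans' (by norm_num), h.1⟩, h.2⟩⟩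
  rw [h1]
  have h2 : ∑ p ∈ (range (N+1)).filter Nat.Prime, Real.log p
      = Real.log (primorial N) := by
    rw [primorial, Nat.cast_prod, Real.log_prod]
    intro p hp
    simp only [mem_filter] at hp
    exact_mod_cast hp.2.pos.ne'
  rw [h2]
  calc Real.log (primorial N) ≤ Real.log ((4:ℕ)^N) := by
        apply Real.log_le_log (by exact_mod_cast (primorial_pos N))
        exact_mod_cast primorial_le_4_pow N
    _ = N * Real.log 4 := by
        push_cast
        rw [Real.log_pow]

lemma count_le (N : ℕ) :
    ∑ p ∈ (Icc 1 N).filter Nat.Prime, ((N / p : ℕ) : ℝ) * Real.log p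
      ≤ ∑ n ∈ Icc 1 N, Real.log n := by
  have key : ∀ n ∈ Icc 1 N, ∑ p ∈ (Icc 1 N).filter Nat.Prime,
      (if p ∣ n then Real.log p else 0) ≤ Real.log n := by
    intro n hn
    simp only [mem_Icc] at hn
    have hfil : (((Icc 1 N).filter Nat.Prime).filter (· ∣ n)) = n.primeFactors := by
      ext p
      simp only [mem_filter, mem_Icc, Nat.mem_primeFactors]
      constructor
      · rintro ⟨⟨-, hp⟩, hd⟩; exact ⟨hp, hd, by omega⟩
      · rintro ⟨hp, hd, -⟩
        have hpn : p ≤ n := Nat.le_of_dvd (by omega) hd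
        exact ⟨⟨⟨hp.one_lt.le, by omega⟩, hp⟩, hd⟩
    rw [← Finset.sum_filter, hfil]
    have h1 : ∑ p ∈ n.primeFactors, Real.log p = Real.log (∏ p ∈ n.primeFactors, (p:ℝ)) := by
      rw [Real.log_prod]
      intro p hp
      exact_mod_cast (Nat.prime_of_mem_primeFactors hp).pos.ne'
    rw [h1]
    apply Real.log_le_log
    · rw [← Nat.cast_prod]
      exact_mod_cast Finset.prod_pos fun p hp => (Nat.prime_of_mem_primeFactors hp).pos
    · rw [← Nat.cast_prod]
      exact_mod_cast Nat.le_of_dvd (by omega) (Nat.prod_primeFactors_dvd n)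
  calc ∑ p ∈ (Icc 1 N).filter Nat.Prime, ((N / p : ℕ) : ℝ) * Real.log p
      = ∑ p ∈ (Icc 1 N).filter Nat.Prime, ∑ n ∈ Icc 1 N,
          (if p ∣ n then Real.log p else 0) := by
        apply Finset.sum_congr rfl
        intro p hp
        rw [← Finset.sum_filter, Finset.sum_const]
        have : Icc 1 N = Ioc 0 N := by rw [← Finset.Icc_add_one_left_eq_Ioc]; rfl
        rw [this, Nat.Ioc_filter_dvd_card_eq_div, nsmul_eq_mul]
    _ = ∑ n ∈ Icc 1 N, ∑ p ∈ (Icc 1 N).filter Nat.Prime,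
          (if p ∣ n then Real.log p else 0) := Finset.sum_comm
    _ ≤ ∑ n ∈ Icc 1 N, Real.log n := Finset.sum_le_sum key

lemma mertens1 (N : ℕ) (hN : 1 ≤ N) :
    ∑ p ∈ (Icc 1 N).filter Nat.Prime, Real.log p / p ≤ Real.log N + Real.log 4 := by
  have hN0 : (0:ℝ) < N := by exact_mod_cast hN
  rw [← mul_le_mul_iff_of_pos_left hN0, Finset.mul_sum]
  have step1 : ∑ p ∈ (Icc 1 N).filter Nat.Prime, (N:ℝ) * (Real.log p / p)
      ≤ ∑ p ∈ (Icc 1 N).filter Nat.Prime, (((N / p : ℕ) : ℝ) + 1) * Real.log p := by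
    apply Finset.sum_le_sum
    intro p hp
    simp only [mem_filter, mem_Icc] at hp
    have hpp := hp.2
    have hp0 : (0:ℝ) < p := by exact_mod_cast hpp.pos
    have hlog : 0 ≤ Real.log p := Real.log_nonneg (by exact_mod_cast hpp.one_lt.le)
    have hdiv : (N:ℝ) / p ≤ ((N / p : ℕ) : ℝ) + 1 := by
      rw [div_le_iff₀ hp0]
      have h1 : N < p * (N / p + 1) := by
        have h2 := Nat.div_add_mod N p
        have h3 := Nat.mod_lt N hpp.pos
        have h4 : p * (N / p + 1) = p * (N / p) + p := by ring
        omega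
      have : (N:ℝ) < p * ((N/p : ℕ) + 1) := by exact_mod_cast h1
      linarith [this]
    calc (N:ℝ) * (Real.log p / p) = ((N:ℝ)/p) * Real.log p := by ring
      _ ≤ (((N / p : ℕ) : ℝ) + 1) * Real.log p := by
          apply mul_le_mul_of_nonneg_right hdiv hlog
  have step2 : ∑ n ∈ Icc 1 N, Real.log n ≤ N * Real.log N := by
    calc ∑ n ∈ Icc 1 N, Real.log n ≤ ∑ _n ∈ Icc 1 N, Real.log N := by
          apply Finset.sum_le_sum
          intro n hn
          simp only [mem_Icc] at hn
          exact Real.log_le_log (by exact_mod_cast hn.1) (by exact_mod_cast hn.2)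
      _ = N * Real.log N := by
          rw [Finset.sum_const, Nat.card_Icc, nsmul_eq_mul]
          norm_num
  calc ∑ p ∈ (Icc 1 N).filter Nat.Prime, (N:ℝ) * (Real.log p / p)
      ≤ ∑ p ∈ (Icc 1 N).filter Nat.Prime, (((N / p : ℕ) : ℝ) + 1) * Real.log p := step1
    _ = ∑ p ∈ (Icc 1 N).filter Nat.Prime, ((N / p : ℕ) : ℝ) * Real.log p
        + ∑ p ∈ (Icc 1 N).filter Nat.Prime, Real.log p := by
          rw [← Finset.sum_add_distrib]
          apply Finset.sum_congr rfl
          intros; ring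
    _ ≤ N * Real.log N + N * Real.log 4 := add_le_add (le_trans (count_le N) step2) (theta_le N)
    _ = N * (Real.log N + Real.log 4) := by ring

lemma abel_id (c : ℕ → ℝ) : ∀ m : ℕ,
    ∑ k ∈ Icc 1 m, c k / k
      = (∑ k ∈ Icc 1 m, c k) / m
        + ∑ k ∈ Icc 1 (m-1), (∑ j ∈ Icc 1 k, c j) / (k*(k+1)) := by
  intro m
  induction m with
  | zero => simp
  | succ n ih =>
    match n, ih with
    | 0, _ => norm_num
    | (j+1), ih =>
      have h1 : j + 1 + 1 - 1 = j + 1 := rfl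
      have h2 : j + 1 - 1 = j := rfl
      rw [h1] at *
      rw [h2] at ih
      rw [Finset.sum_Icc_succ_top (by omega : 1 ≤ j+1+1),
          Finset.sum_Icc_succ_top (by omega : 1 ≤ j+1+1) c,
          Finset.sum_Icc_succ_top (by omega : 1 ≤ j+1)
            (fun k => (∑ i ∈ Icc 1 k, c i) / (k*(k+1))), ih]
      have hj : ((j:ℝ)+1) ≠ 0 := by positivity
      have hj2 : ((j:ℝ)+1+1) ≠ 0 := by positivity
      push_cast
      field_simp
      ring

lemma aux1 : ∀ m : ℕ, ∑ k ∈ Icc 1 m, (1:ℝ)/(k+1) ≤ Real.log (m+1) := by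
  intro m
  induction m with
  | zero => simp
  | succ n ih =>
    rw [Finset.sum_Icc_succ_top (by omega : 1 ≤ n+1)]
    have key : (1:ℝ)/(n+1+1) ≤ Real.log (n+1+1) - Real.log (n+1) := by
      have h1 : (0:ℝ) < (n:ℝ)+1 := by positivity
      have h2 : (0:ℝ) < (n:ℝ)+1+1 := by positivity
      have h3 := Real.log_le_sub_one_of_pos (show (0:ℝ) < ((n:ℝ)+1)/((n:ℝ)+1+1) by positivity)
      rw [Real.log_div h1.ne' h2.ne'] at h3
      have : ((n:ℝ)+1)/((n:ℝ)+1+1) - 1 = -(1/((n:ℝ)+1+1)) := by field_simp; ring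
      rw [this] at h3
      linarith
    push_cast
    push_cast at ih key
    linarith
lemma aux2 : ∀ m : ℕ, ∑ k ∈ Icc 1 m, (1:ℝ)/(k*(k+1)) = 1 - 1/(m+1) := by
  intro m
  induction m with
  | zero => simp
  | succ n ih =>
    rw [Finset.sum_Icc_succ_top (by omega : 1 ≤ n+1), ih]
    have h1 : ((n:ℝ)+1) ≠ 0 := by positivity
    have h2 : ((n:ℝ)+1+1) ≠ 0 := by positivity
    push_cast
    field_simp
    ring

lemma abel_bound (c : ℕ → ℝ) (a b : ℝ) (ha : 0 ≤ a) (hb : 0 ≤ b)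
    (h : ∀ j : ℕ, 1 ≤ j → ∑ k ∈ Icc 1 j, c k ≤ a * j + b)
    (m : ℕ) (hm : 1 ≤ m) :
    ∑ k ∈ Icc 1 m, c k / k ≤ a + 2*b + a * Real.log m := by
  obtain ⟨j, rfl⟩ : ∃ j, m = j + 1 := ⟨m-1, by omega⟩
  rw [abel_id]
  have hm0 : (0:ℝ) < (j:ℝ)+1 := by positivity
  have hterm1 : (∑ k ∈ Icc 1 (j+1), c k) / ((j+1:ℕ):ℝ) ≤ a + b := by
    have := h (j+1) (by omega)
    rw [div_le_iff₀ (by push_cast; positivity)]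
    push_cast
    push_cast at this
    nlinarith [hm0]
  have hterm2 : ∑ k ∈ Icc 1 (j+1-1), (∑ i ∈ Icc 1 k, c i) / (k*(k+1))
      ≤ a * Real.log ((j:ℝ)+1) + b := by
    have h2 : ∀ k ∈ Icc 1 j, (∑ i ∈ Icc 1 k, c i) / ((k:ℝ)*(k+1))
        ≤ a * (1/((k:ℝ)+1)) + b * (1/((k:ℝ)*(k+1))) := by
      intro k hk
      simp only [mem_Icc] at hk
      have hk0 : (0:ℝ) < (k:ℝ) := by exact_mod_cast hk.1
      have hkk : (0:ℝ) < (k:ℝ)*((k:ℝ)+1) := by positivity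
      have hC := h k hk.1
      rw [div_le_iff₀ hkk]
      calc ∑ i ∈ Icc 1 k, c i ≤ a*k + b := hC
        _ = (a * (1/((k:ℝ)+1)) + b * (1/((k:ℝ)*(k+1)))) * ((k:ℝ)*((k:ℝ)+1)) := by
            field_simp
    have h3 : j + 1 - 1 = j := rfl
    rw [h3]
    calc ∑ k ∈ Icc 1 j, (∑ i ∈ Icc 1 k, c i) / ((k:ℝ)*(k+1))
        ≤ ∑ k ∈ Icc 1 j, (a * (1/((k:ℝ)+1)) + b * (1/((k:ℝ)*(k+1)))) :=
          Finset.sum_le_sum h2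
      _ = a * (∑ k ∈ Icc 1 j, (1:ℝ)/(k+1)) + b * (∑ k ∈ Icc 1 j, (1:ℝ)/(k*(k+1))) := by
          rw [Finset.sum_add_distrib, Finset.mul_sum, Finset.mul_sum]
      _ ≤ a * Real.log ((j:ℝ)+1) + b := by
          have ha1 := aux1 j
          have ha2 := aux2 j
          rw [ha2]
          have h4 : (0:ℝ) ≤ 1/((j:ℝ)+1) := by positivity
          have h5 : b * (1 - 1/((j:ℝ)+1)) ≤ b := by nlinarith [mul_nonneg hb h4]
          have h6 : a * (∑ k ∈ Icc 1 j, (1:ℝ)/(k+1)) ≤ a * Real.log ((j:ℝ)+1) := by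
            have := mul_le_mul_of_nonneg_left ha1 ha
            push_cast at this ⊢
            linarith
          linarith
  refine le_trans (add_le_add hterm1 hterm2) ?_
  push_cast
  linarith

lemma blocks (g : ℕ → ℝ) : ∀ K : ℕ, 1 ≤ K →
    ∑ p ∈ Ioc 2 (2^K), g p = ∑ k ∈ Ico 1 K, ∑ p ∈ Ioc (2^k) (2^(k+1)), g p := by
  intro K hK
  induction K, hK using Nat.le_induction with
  | base => simp
  | succ n hn ih =>
    have h1 : (2:ℕ) ≤ 2^n := by
      calc (2:ℕ) = 2^1 := rfl
        _ ≤ 2^n := Nat.pow_le_pow_right (by norm_num) hn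
    have h2 : (2:ℕ)^n ≤ 2^(n+1) := Nat.pow_le_pow_right (by norm_num) (by omega)
    rw [← Finset.sum_Ioc_consecutive g h1 h2, ih, Finset.sum_Ico_succ_top hn]

lemma mertens2 (K : ℕ) (hK : 1 ≤ K) :
    ∑ p ∈ (Icc 1 (2^K)).filter Nat.Prime, (1:ℝ)/p ≤ Real.log K + 8 := by
  have hlog2 : (0:ℝ) < Real.log 2 := Real.log_pos (by norm_num)
  set g : ℕ → ℝ := fun p => if Nat.Prime p then (1:ℝ)/p else 0 with hg
  set f : ℕ → ℝ := fun p => if Nat.Prime p then Real.log p / p else 0 with hf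
  have hfnn : ∀ p, 0 ≤ f p := by
    intro p
    simp only [hf]
    split
    · rename_i hp
      have : (1:ℝ) ≤ p := by exact_mod_cast hp.one_lt.le
      positivity
    · exact le_rfl
  -- split off the prime 2
  have h2K : (2:ℕ) ≤ 2^K := by
    calc (2:ℕ) = 2^1 := rfl
      _ ≤ 2^K := Nat.pow_le_pow_right (by norm_num) hK
  have hsplit : (Icc 1 (2^K)).filter Nat.Prime
      = insert 2 ((Ioc 2 (2^K)).filter Nat.Prime) := by
    ext p
    simp only [mem_filter, mem_Icc, mem_Ioc, mem_insert]
    constructor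
    · rintro ⟨⟨-, hup⟩, hp⟩
      rcases eq_or_lt_of_le hp.two_le with h | h
      · exact Or.inl h.symm
      · exact Or.inr ⟨⟨h, hup⟩, hp⟩
    · rintro (rfl | ⟨⟨h1, h2⟩, hp⟩)
      · exact ⟨⟨by norm_num, h2K⟩, Nat.prime_two⟩
      · exact ⟨⟨hp.one_lt.le, h2⟩, hp⟩
  rw [hsplit, Finset.sum_insert (by simp)]
  -- the tail sum
  have hrest : ∑ p ∈ (Ioc 2 (2^K)).filter Nat.Prime, (1:ℝ)/p
      ≤ Real.log K + 7.5 := by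
    rcases Nat.lt_or_ge K 2 with hK2 | hK2
    · interval_cases K
      · norm_num
    · -- K ≥ 2
      have hblocks : ∑ p ∈ (Ioc 2 (2^K)).filter Nat.Prime, (1:ℝ)/p
          = ∑ k ∈ Ico 1 K, ∑ p ∈ Ioc (2^k) (2^(k+1)), g p := by
        rw [← blocks g K hK, Finset.sum_filter]
      rw [hblocks]
      set c : ℕ → ℝ := fun k => ∑ p ∈ Ioc (2^k) (2^(k+1)), f p with hc
      have hblockle : ∀ k ∈ Ico 1 K,
          ∑ p ∈ Ioc (2^k) (2^(k+1)), g p ≤ (c k / Real.log 2) / k := by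
        intro k hk
        simp only [mem_Ico] at hk
        have hk1 : (1:ℝ) ≤ k := by exact_mod_cast hk.1
        have hkl : (0:ℝ) < k * Real.log 2 := by nlinarith
        have : ∀ p ∈ Ioc (2^k) (2^(k+1)), g p ≤ f p / (k * Real.log 2) := by
          intro p hp
          simp only [mem_Ioc] at hp
          simp only [hg, hf]
          split
          · rename_i hpp
            have hp0 : (0:ℝ) < p := by exact_mod_cast hpp.pos
            have hlogp : (k:ℝ) * Real.log 2 ≤ Real.log p := by
              rw [← Real.log_pow]
              apply Real.log_le_log (by positivity)
              exact_mod_cast hp.1.le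
            rw [div_div]
            rw [div_le_div_iff₀ hp0 (by positivity)]
            calc 1 * ((p:ℝ) * ((k:ℝ) * Real.log 2)) = ((k:ℝ) * Real.log 2) * p := by ring
              _ ≤ Real.log p * p := by nlinarith
          · simp [le_div_iff₀ hkl]
        calc ∑ p ∈ Ioc (2^k) (2^(k+1)), g p
            ≤ ∑ p ∈ Ioc (2^k) (2^(k+1)), f p / (k * Real.log 2) := Finset.sum_le_sum this
          _ = (c k / Real.log 2) / k := by
              rw [← Finset.sum_div, hc]
              rw [div_div, mul_comm]
      have hico : Ico 1 K = Icc 1 (K-1) := by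
        rw [← Finset.Ico_add_one_right_eq_Icc]
        congr 1
        omega
      have habel : ∑ k ∈ Icc 1 (K-1), (c k / Real.log 2) / k
          ≤ 1 + 2*3 + 1 * Real.log (K-1 : ℕ) := by
        apply abel_bound (fun k => c k / Real.log 2) 1 3 (by norm_num) (by norm_num)
        · intro j hj
          rw [← Finset.sum_div]
          rw [div_le_iff₀ hlog2]
          have hcsum : ∑ k ∈ Icc 1 j, c k
              = ∑ p ∈ (Ioc 2 (2^(j+1))).filter Nat.Prime, Real.log p / p := by
            have : Icc 1 j = Ico 1 (j+1) := by rw [Finset.Ico_add_one_right_eq_Icc]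
            rw [this, ← blocks f (j+1) (by omega), Finset.sum_filter]
          rw [hcsum]
          have hsub : ∑ p ∈ (Ioc 2 (2^(j+1))).filter Nat.Prime, Real.log p / p
              ≤ ∑ p ∈ (Icc 1 (2^(j+1))).filter Nat.Prime, Real.log p / p := by
            apply Finset.sum_le_sum_of_subset_of_nonneg
            · apply Finset.filter_subset_filter
              intro p hp
              simp only [mem_Ioc, mem_Icc] at hp ⊢
              omega
            · intro p hp _
              simp only [mem_filter] at hp
              have : (1:ℝ) ≤ p := by exact_mod_cast hp.2.one_lt.le
              positivity
          have hm1 := mertens1 (2^(j+1)) (Nat.one_le_two_pow)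
          have hlogpow : Real.log ((2:ℕ)^(j+1) : ℕ) = (j+1) * Real.log 2 := by
            push_cast
            rw [Real.log_pow]
            push_cast
            ring
          have hlog4 : Real.log 4 = 2 * Real.log 2 := by
            rw [show (4:ℝ) = 2^2 by norm_num, Real.log_pow]
            push_cast; ring
          calc ∑ p ∈ (Ioc 2 (2^(j+1))).filter Nat.Prime, Real.log p / p
              ≤ Real.log ((2:ℕ)^(j+1) : ℕ) + Real.log 4 := le_trans hsub hm1
            _ = (j+1) * Real.log 2 + 2 * Real.log 2 := by rw [hlogpow, hlog4]
            _ ≤ (1 * j + 3) * Real.log 2 := by nlinarith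
        · omega
      have hfin : Real.log ((K-1:ℕ):ℝ) ≤ Real.log K := by
        apply Real.log_le_log
        · have : (1:ℕ) ≤ K - 1 := by omega
          exact_mod_cast this
        · exact_mod_cast Nat.sub_le K 1
      calc ∑ k ∈ Ico 1 K, ∑ p ∈ Ioc (2^k) (2^(k+1)), g p
          ≤ ∑ k ∈ Ico 1 K, (c k / Real.log 2) / k := Finset.sum_le_sum hblockle
        _ = ∑ k ∈ Icc 1 (K-1), (c k / Real.log 2) / k := by rw [hico]
        _ ≤ 1 + 2*3 + 1 * Real.log ((K-1:ℕ):ℝ) := habel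
        _ ≤ Real.log K + 7.5 := by nlinarith [hfin]
  have h2 : g 2 = 1/2 := by simp [hg, Nat.prime_two]
  push_cast
  nlinarith [hrest]

/-- `∏_{p ∣ q} (1 + 1/p) ≤ K · log log(e^e q)` for an absolute constant `K`. -/
theorem stmt16 :
    ∃ K : ℝ, 0 < K ∧ ∀ q : ℕ, 0 < q →
      ∏ p ∈ q.primeFactors, (1 + 1 / (p : ℝ))
        ≤ K * Real.log (Real.log (Real.exp (Real.exp 1) * q)) := by
  refine ⟨4 * Real.exp 10, by positivity, ?_⟩
  intro q hq
  have hlog2 : (0.6931471803 : ℝ) < Real.log 2 := Real.log_two_gt_d9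
  set Lq : ℝ := Real.log q with hLq
  have hLq0 : 0 ≤ Lq := Real.log_natCast_nonneg q
  set x : ℝ := Real.exp 1 + Lq with hx
  have hx1 : (1:ℝ) ≤ x := by
    have := Real.add_one_le_exp (1:ℝ)
    simp only [hx]; linarith
  have hlogx1 : (1:ℝ) ≤ Real.log x := by
    have h1 : Real.log (Real.exp 1) ≤ Real.log x := by
      apply Real.log_le_log (Real.exp_pos 1)
      simp only [hx]; linarith
    rwa [Real.log_exp] at h1
  -- RHS simplification
  have hRHS : Real.log (Real.log (Real.exp (Real.exp 1) * q)) = Real.log x := by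
    rw [Real.log_mul (Real.exp_ne_zero _) (by exact_mod_cast hq.ne'), Real.log_exp]
  rw [hRHS]
  -- choose K
  set Kn : ℕ := ⌈Real.logb 2 x⌉₊ + 1 with hKn
  have hKn1 : 1 ≤ Kn := by omega
  have hKnR : (1:ℝ) ≤ (Kn:ℝ) := by exact_mod_cast hKn1
  have hpow : x ≤ (2:ℝ)^(Kn:ℕ) := by
    have h1 : x = (2:ℝ) ^ (Real.logb 2 x) := (Real.rpow_logb (by norm_num) (by norm_num) (by linarith)).symm
    have h2 : Real.logb 2 x ≤ (Kn:ℝ) := by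
      have := Nat.le_ceil (Real.logb 2 x)
      have h3 : ((⌈Real.logb 2 x⌉₊:ℝ)) ≤ (Kn:ℝ) := by
        simp only [hKn]; push_cast; linarith
      linarith
    calc x = (2:ℝ) ^ (Real.logb 2 x) := h1
      _ ≤ (2:ℝ) ^ ((Kn:ℕ):ℝ) := Real.rpow_le_rpow_of_exponent_le (by norm_num) h2
      _ = (2:ℝ)^(Kn:ℕ) := Real.rpow_natCast 2 Kn
  have hKle : (Kn:ℝ) ≤ 4 * Real.log x := by
    have h0 : 0 ≤ Real.logb 2 x := Real.logb_nonneg (by norm_num) hx1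
    have h1 : ((⌈Real.logb 2 x⌉₊:ℝ)) < Real.logb 2 x + 1 := Nat.ceil_lt_add_one h0
    have h2 : Real.logb 2 x ≤ 1.5 * Real.log x := by
      rw [Real.logb, div_le_iff₀ (by linarith)]
      nlinarith [hlogx1]
    simp only [hKn]
    push_cast
    nlinarith
  -- sum of reciprocals of prime factors
  have hradlog : ∑ p ∈ q.primeFactors, Real.log p ≤ Lq := by
    have h1 : ∑ p ∈ q.primeFactors, Real.log p
        = Real.log (∏ p ∈ q.primeFactors, (p:ℝ)) := by
      rw [Real.log_prod]
      intro p hp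
      exact_mod_cast (Nat.prime_of_mem_primeFactors hp).pos.ne'
    rw [h1, hLq]
    apply Real.log_le_log
    · rw [← Nat.cast_prod]
      exact_mod_cast Finset.prod_pos fun p hp => (Nat.prime_of_mem_primeFactors hp).pos
    · rw [← Nat.cast_prod]
      exact_mod_cast Nat.le_of_dvd hq (Nat.prod_primeFactors_dvd q)
  have hsum : ∑ p ∈ q.primeFactors, (1:ℝ)/p ≤ Real.log Kn + 10 := by
    rw [← Finset.sum_filter_add_sum_filter_not q.primeFactors (· ≤ 2^Kn)]
    have hsmall : ∑ p ∈ q.primeFactors.filter (· ≤ 2^Kn), (1:ℝ)/p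
        ≤ Real.log Kn + 8 := by
      refine le_trans ?_ (mertens2 Kn hKn1)
      apply Finset.sum_le_sum_of_subset_of_nonneg
      · intro p hp
        simp only [mem_filter, mem_Icc] at hp ⊢
        have hpp := Nat.prime_of_mem_primeFactors hp.1
        exact ⟨⟨hpp.one_lt.le, hp.2⟩, hpp⟩
      · intro p hp _
        simp only [mem_filter, mem_Icc] at hp
        have : (1:ℝ) ≤ p := by exact_mod_cast hp.1.1
        positivity
    have hlarge : ∑ p ∈ q.primeFactors.filter (¬ · ≤ 2^Kn), (1:ℝ)/p ≤ 2 := by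
      have hKl2 : (0:ℝ) < (Kn:ℝ) * Real.log 2 := by nlinarith
      have hp2K : (0:ℝ) < (2:ℝ)^(Kn:ℕ) := by positivity
      have hper : ∀ p ∈ q.primeFactors.filter (¬ · ≤ 2^Kn),
          (1:ℝ)/p ≤ Real.log p / ((2:ℝ)^(Kn:ℕ) * ((Kn:ℝ) * Real.log 2)) := by
        intro p hp
        simp only [mem_filter, not_le] at hp
        have hpgt : ((2:ℝ)^(Kn:ℕ)) < p := by exact_mod_cast hp.2
        have hp0 : (0:ℝ) < p := lt_trans hp2K hpgt
        have hlogp : (Kn:ℝ) * Real.log 2 ≤ Real.log p := by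
          rw [← Real.log_pow]
          exact Real.log_le_log hp2K hpgt.le
        rw [div_le_div_iff₀ hp0 (by positivity)]
        calc 1 * ((2:ℝ)^(Kn:ℕ) * ((Kn:ℝ) * Real.log 2))
            ≤ (Kn:ℝ) * Real.log 2 * p := by nlinarith
          _ ≤ Real.log p * p := by nlinarith
      calc ∑ p ∈ q.primeFactors.filter (¬ · ≤ 2^Kn), (1:ℝ)/p
          ≤ ∑ p ∈ q.primeFactors.filter (¬ · ≤ 2^Kn),
              Real.log p / ((2:ℝ)^(Kn:ℕ) * ((Kn:ℝ) * Real.log 2)) := Finset.sum_le_sum hper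
        _ = (∑ p ∈ q.primeFactors.filter (¬ · ≤ 2^Kn), Real.log p)
              / ((2:ℝ)^(Kn:ℕ) * ((Kn:ℝ) * Real.log 2)) := by rw [Finset.sum_div]
        _ ≤ Lq / ((2:ℝ)^(Kn:ℕ) * ((Kn:ℝ) * Real.log 2)) := by
            apply div_le_div_of_nonneg_right ?_ (by positivity)
            refine le_trans ?_ hradlog
            apply Finset.sum_le_sum_of_subset_of_nonneg (Finset.filter_subset _ _)
            intro p hp _
            have : (1:ℝ) ≤ p := by
              exact_mod_cast (Nat.prime_of_mem_primeFactors hp).one_lt.le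
            exact Real.log_nonneg this
        _ ≤ 2 := by
            rw [div_le_iff₀ (by positivity)]
            have hLqle : Lq ≤ (2:ℝ)^(Kn:ℕ) := le_trans (by simp only [hx]; nlinarith [Real.exp_pos 1]) hpow
            have h1 : (1:ℝ) ≤ 2*((Kn:ℝ)*Real.log 2) := by nlinarith
            have h2 := mul_le_mul_of_nonneg_left h1 hp2K.le
            nlinarith
    nlinarith [hsmall, hlarge]
  -- from sum to product
  have hprod : ∏ p ∈ q.primeFactors, (1 + 1/(p:ℝ))
      ≤ Real.exp (∑ p ∈ q.primeFactors, (1:ℝ)/p) := by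
    rw [Real.exp_sum]
    apply Finset.prod_le_prod
    · intro p hp
      have : (1:ℝ) ≤ p := by exact_mod_cast (Nat.prime_of_mem_primeFactors hp).one_lt.le
      positivity
    · intro p hp
      have := Real.add_one_le_exp ((1:ℝ)/p)
      linarith
  calc ∏ p ∈ q.primeFactors, (1 + 1/(p:ℝ))
      ≤ Real.exp (∑ p ∈ q.primeFactors, (1:ℝ)/p) := hprod
    _ ≤ Real.exp (Real.log Kn + 10) := Real.exp_le_exp.mpr hsum
    _ = (Kn:ℝ) * Real.exp 10 := by
        rw [Real.exp_add, Real.exp_log (by linarith)]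
    _ ≤ (4 * Real.log x) * Real.exp 10 := by
        apply mul_le_mul_of_nonneg_right hKle (Real.exp_pos 10).le
    _ = 4 * Real.exp 10 * Real.log x := by ring
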